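/- In every state (S, C, D, χ, α) reachable from the initial state via the transition rules of basic Incremental Determinization, every existential variable in the union of D has a unique Skolem function for domain χ∧α in the clause set C|_D (where C and D denote the unions of the respective stacks). -/

import Mathlib

/-! Basic framework: variables are `X ⊕ Y` where `X` are the universal and
`Y` the existential variables (this makes `X` and `Y` disjoint by construction). -/

/-- A literal: a variable together with a polarity. -/
abbrev Lit (X Y : Type) := (X ⊕ Y) × Bool

/-- A clause is a finite set of literals. -/
abbrev Clause (X Y : Type) := Finset (Lit X Y)

/-- A (total) assignment to all variables. Assignments "to a set `D` of variables"
are modelled as total assignments; all notions below only inspect the relevant variables. -/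
abbrev Assn (X Y : Type) := (X ⊕ Y) → Bool

/-- An assignment satisfies a literal if it maps its variable to its polarity. -/
def satLit {X Y : Type} (σ : Assn X Y) (l : Lit X Y) : Prop := σ l.1 = l.2

/-- An assignment satisfies a clause if it satisfies at least one of its literals. -/
def satClause {X Y : Type} (σ : Assn X Y) (c : Clause X Y) : Prop := ∃ l ∈ c, satLit σ l

/-- An assignment satisfies a clause set if it satisfies every clause in it. -/
def satCnf {X Y : Type} (σ : Assn X Y) (ψ : Set (Clause X Y)) : Prop := ∀ c ∈ ψ, satClause σ c

/-- The combined assignment `(xa, ya)`. -/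
def combine {X Y : Type} (xa : X → Bool) (ya : Y → Bool) : Assn X Y := Sum.elim xa ya

/-- The restriction of an assignment to the universal variables `X`. -/
def restrX {X Y : Type} (σ : Assn X Y) : X → Bool := fun x => σ (Sum.inl x)

/-- Truth of the 2QBF `∀X.∃Y.φ`: there is a Skolem function `f` such that for every
assignment `xa` to `X` the combined assignment `(xa, f(xa))` satisfies `φ`. -/
def qbfTrue {X Y : Type} (φ : Set (Clause X Y)) : Prop :=
  ∃ f : (X → Bool) → (Y → Bool), ∀ xa : X → Bool, satCnf (combine xa (f xa)) φ

/-- `v` has a unique Skolem function for domain `χ` in `ψ`: for every assignment `xa` to `X`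
satisfying `χ` there is exactly one Boolean `b` such that some assignment `ya` to the
existential variables with `ya v = b` makes `(xa, ya)` satisfy `ψ`. -/
def uniqueSkolem {X Y : Type} (ψ : Set (Clause X Y)) (χ : (X → Bool) → Prop) (v : Y) : Prop :=
  ∀ xa : X → Bool, χ xa →
    ∃! b : Bool, ∃ ya : Y → Bool, ya v = b ∧ satCnf (combine xa ya) ψ

/-- `C|_D`: the clauses of `C` all of whose variables lie in `D`. -/
def restrictC {X Y : Type} (C : Set (Clause X Y)) (D : Set (X ⊕ Y)) : Set (Clause X Y) :=
  {c ∈ C | ∀ l ∈ c, l.1 ∈ D}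

/-- Clause `c` has unique consequence `v` relative to `D`: it contains a literal of `v`
and all its other literals are of variables in `D`. -/
def hasUC {X Y : Type} (c : Clause X Y) (v : Y) (D : Set (X ⊕ Y)) : Prop :=
  (∃ b : Bool, (Sum.inr v, b) ∈ c) ∧ ∀ l ∈ c, l.1 ≠ Sum.inr v → l.1 ∈ D

/-- `U_v`: the clauses of `C` with unique consequence `v` relative to `D`. -/
def UC {X Y : Type} (C : Set (Clause X Y)) (v : Y) (D : Set (X ⊕ Y)) : Set (Clause X Y) :=
  {c ∈ C | hasUC c v D}

/-- `A_(v,b)`: some clause `c` in `U_v` contains the literal `(v, b)` and the assignment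
falsifies every literal of `c` other than the literals of `v`. -/
def Ant {X Y : Type} (C : Set (Clause X Y)) (v : Y) (D : Set (X ⊕ Y)) (b : Bool)
    (σ : Assn X Y) : Prop :=
  ∃ c ∈ UC C v D, (Sum.inr v, b) ∈ c ∧ ∀ l ∈ c, l.1 ≠ Sum.inr v → ¬ satLit σ l

/-- `deterministic(v, C, χ, D)`. -/
def deterministic {X Y : Type} (v : Y) (C : Set (Clause X Y)) (χ : (X → Bool) → Prop)
    (D : Set (X ⊕ Y)) : Prop :=
  ∀ σ : Assn X Y, satCnf σ (restrictC C D) → χ (restrX σ) →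
    Ant C v D true σ ∨ Ant C v D false σ

/-- `unconflicted(v, C, χ, D)`. -/
def unconflicted {X Y : Type} (v : Y) (C : Set (Clause X Y)) (χ : (X → Bool) → Prop)
    (D : Set (X ⊕ Y)) : Prop :=
  ∀ σ : Assn X Y, satCnf σ (restrictC C D) → χ (restrX σ) →
    ¬ (Ant C v D true σ ∧ Ant C v D false σ)

/-- `v` has a unique Skolem function relative to `D` for domain `χ` in `C`: for every
assignment to `D` satisfying `C|_D` whose restriction to `X` satisfies `χ`, there is exactly
one Boolean `b` such that extending the assignment by `v ↦ b` satisfies every clause of `U_v`. -/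
def uniqueSkolemRel {X Y : Type} [DecidableEq X] [DecidableEq Y] (v : Y)
    (C : Set (Clause X Y)) (χ : (X → Bool) → Prop) (D : Set (X ⊕ Y)) : Prop :=
  ∀ σ : Assn X Y, satCnf σ (restrictC C D) → χ (restrX σ) →
    ∃! b : Bool, satCnf (Function.update σ (Sum.inr v) b) (UC C v D)

/-! The state of the Incremental Determinization solver. -/

/-- The solver status. -/
inductive Status (X Y : Type) where
  | ready : Status X Y
  | conflict (L : Clause X Y) (d : Assn X Y) : Status X Y
  | sat : Status X Y
  | unsat : Status X Y

/-- A solver state `(S, C, D, χ, α)`: a status, a stack of clause sets, a stack of sets of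
variables, and two predicates on assignments to `X`. -/
structure IDState (X Y : Type) where
  status : Status X Y
  C : List (Set (Clause X Y))
  D : List (Set (X ⊕ Y))
  chi : (X → Bool) → Prop
  alpha : (X → Bool) → Prop

/-- The union of the elements of a stack of sets. -/
def stackUnion {β : Type} (S : List (Set β)) : Set β := {x | ∃ s ∈ S, x ∈ s}

/-- The first element (index 0) of a stack of sets. -/
def first {β : Type} (S : List (Set β)) : Set β := S.getD 0 ∅

/-- Add an element to the last set of a stack. -/
def addLast {β : Type} : List (Set β) → β → List (Set β)
  | [], v => [{v}]
  | [s], v => [insert v s]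
  | s :: t :: rest, v => s :: addLast (t :: rest) v

/-- Add an element to the first set of a stack. -/
def addFirst {β : Type} : List (Set β) → β → List (Set β)
  | [], x => [{x}]
  | s :: rest, x => insert x s :: rest

/-- The initial state `(Ready, ⟨φ⟩, ⟨X⟩, ⊤, ⊤)`. -/
def initState {X Y : Type} (φ : Set (Clause X Y)) : IDState X Y :=
  ⟨Status.ready, [φ], [Set.range Sum.inl], fun _ => True, fun _ => True⟩

/-- The transition rules of basic Incremental Determinization. -/
inductive Step {X Y : Type} [DecidableEq X] [DecidableEq Y] :
    IDState X Y → IDState X Y → Prop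

  | propagate (C : List (Set (Clause X Y))) (D : List (Set (X ⊕ Y)))
      (χ α : (X → Bool) → Prop) (v : Y)
      (hv : Sum.inr v ∉ stackUnion D)
      (hdet : deterministic v (stackUnion C) (fun xa => χ xa ∧ α xa) (stackUnion D))
      (hunc : unconflicted v (stackUnion C) (fun xa => χ xa ∧ α xa) (stackUnion D)) :
      Step ⟨Status.ready, C, D, χ, α⟩ ⟨Status.ready, C, addLast D (Sum.inr v), χ, α⟩
  | decide (C : List (Set (Clause X Y))) (D : List (Set (X ⊕ Y)))
      (χ α : (X → Bool) → Prop) (v : Y) (δ : Set (Clause X Y))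
      (hv : Sum.inr v ∉ stackUnion D) (hδfin : δ.Finite)
      (hδ : ∀ c ∈ δ, hasUC c v (stackUnion D)) :
      Step ⟨Status.ready, C, D, χ, α⟩ ⟨Status.ready, C ++ [δ], D ++ [∅], χ, α⟩
  | sat (C : List (Set (Clause X Y))) (D : List (Set (X ⊕ Y)))
      (χ : (X → Bool) → Prop)
      (hD : stackUnion D = Set.univ) :
      Step ⟨Status.ready, C, D, χ, fun _ => True⟩ ⟨Status.sat, C, D, χ, fun _ => True⟩
  | conflict (C : List (Set (Clause X Y))) (D : List (Set (X ⊕ Y)))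
      (χ α : (X → Bool) → Prop) (v : Y) (σ : Assn X Y)
      (hv : Sum.inr v ∉ stackUnion D)
      (hsat : satCnf σ (restrictC (stackUnion C) (stackUnion D)))
      (hχ : χ (restrX σ)) (hα : α (restrX σ))
      (ht : Ant (stackUnion C) v (stackUnion D) true σ)
      (hf : Ant (stackUnion C) v (stackUnion D) false σ) :
      Step ⟨Status.ready, C, D, χ, α⟩
        ⟨Status.conflict {(Sum.inr v, true), (Sum.inr v, false)} σ, C, D, χ, α⟩
  | analyze (C : List (Set (Clause X Y))) (D : List (Set (X ⊕ Y)))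
      (χ α : (X → Bool) → Prop) (L : Clause X Y) (σ : Assn X Y)
      (c : Clause X Y) (l : Lit X Y)
      (hc : c ∈ first C) (hl : l ∈ L) (hlc : (l.1, !l.2) ∈ c) :
      Step ⟨Status.conflict L σ, C, D, χ, α⟩
        ⟨Status.conflict (L.erase l ∪ c.erase (l.1, !l.2)) σ, C, D, χ, α⟩
  | learn (C : List (Set (Clause X Y))) (D : List (Set (X ⊕ Y)))
      (χ α : (X → Bool) → Prop) (L : Clause X Y) (σ : Assn X Y)
      (h : ∃ l ∈ L, l.1 ∉ stackUnion D) :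
      Step ⟨Status.conflict L σ, C, D, χ, α⟩ ⟨Status.ready, addFirst C L, D, χ, α⟩
  | unsat (C : List (Set (Clause X Y))) (D : List (Set (X ⊕ Y)))
      (χ α : (X → Bool) → Prop) (L : Clause X Y) (σ : Assn X Y)
      (hvars : ∀ l ∈ L, l.1 ∈ first D)
      (hfals : ∀ l ∈ L, ¬ satLit σ l) :
      Step ⟨Status.conflict L σ, C, D, χ, α⟩ ⟨Status.unsat, C, D, χ, α⟩
  | backtrack (S : Status X Y) (C : List (Set (Clause X Y))) (D : List (Set (X ⊕ Y)))
      (χ α : (X → Bool) → Prop) (k : ℕ) (h0 : 0 < k) (hk : k ≤ C.length) :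
      Step ⟨S, C, D, χ, α⟩ ⟨S, C.take k, D.take k, χ, α⟩

/-- Reachability from the initial state via the basic ID rules. -/
def Reachable {X Y : Type} [DecidableEq X] [DecidableEq Y] (φ : Set (Clause X Y))
    (s : IDState X Y) : Prop :=
  Relation.ReflTransGen Step (initState φ) s
/-! ### Auxiliary lemmas for the proof -/

section Aux

variable {β : Type}

lemma stackUnion_nil : stackUnion ([] : List (Set β)) = ∅ := by
  ext x; simp [stackUnion]

lemma stackUnion_cons (s : Set β) (L : List (Set β)) :
    stackUnion (s :: L) = s ∪ stackUnion L := by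
  ext x
  constructor
  · rintro ⟨t, ht, hx⟩
    rcases List.mem_cons.1 ht with h | h
    · exact Or.inl (h ▸ hx)
    · exact Or.inr ⟨t, h, hx⟩
  · rintro (hx | ⟨t, ht, hx⟩)
    · exact ⟨s, List.mem_cons_self, hx⟩
    · exact ⟨t, List.mem_cons_of_mem _ ht, hx⟩

lemma stackUnion_append (L1 L2 : List (Set β)) :
    stackUnion (L1 ++ L2) = stackUnion L1 ∪ stackUnion L2 := by
  ext x
  constructor
  · rintro ⟨t, ht, hx⟩
    rcases List.mem_append.1 ht with h | h
    · exact Or.inl ⟨t, h, hx⟩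
    · exact Or.inr ⟨t, h, hx⟩
  · rintro (⟨t, ht, hx⟩ | ⟨t, ht, hx⟩)
    · exact ⟨t, List.mem_append.2 (Or.inl ht), hx⟩
    · exact ⟨t, List.mem_append.2 (Or.inr ht), hx⟩

lemma stackUnion_take_subset (L : List (Set β)) (k : ℕ) :
    stackUnion (L.take k) ⊆ stackUnion L :=
  fun _ ⟨t, ht, hx⟩ => ⟨t, List.take_subset _ _ ht, hx⟩


lemma addLast_length {β : Type} (L : List (Set β)) (x : β) (h : L ≠ []) :
    (addLast L x).length = L.length := by
  induction L with
  | nil => exact absurd rfl h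
  | cons s t ih =>
    cases t with
    | nil => rfl
    | cons t rest =>
      simp only [addLast, List.length_cons]
      rw [ih (by simp)]
      simp

lemma stackUnion_addLast {β : Type} (L : List (Set β)) (x : β) :
    stackUnion (addLast L x) = insert x (stackUnion L) := by
  induction L with
  | nil =>
    show stackUnion [{x}] = _
    rw [stackUnion_cons]
    simp [stackUnion_nil]
  | cons s t ih =>
    cases t with
    | nil =>
      show stackUnion [insert x s] = _
      rw [stackUnion_cons, stackUnion_cons]
      simp [stackUnion_nil, Set.insert_union]
    | cons t rest =>
      show stackUnion (s :: addLast (t :: rest) x) = _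
      rw [stackUnion_cons, ih, Set.union_insert]; simp [stackUnion_cons]

lemma addLast_take {β : Type} (L : List (Set β)) (x : β) (k : ℕ) (hk : k < L.length) :
    (addLast L x).take k = L.take k := by
  induction L generalizing k with
  | nil => simp at hk
  | cons s t ih =>
    cases t with
    | nil =>
      cases k with
      | zero => rfl
      | succ k => simp at hk
    | cons t rest =>
      show (s :: addLast (t :: rest) x).take k = _
      cases k with
      | zero => rfl
      | succ k =>
        simp only [List.take_succ_cons]
        rw [ih k (by simpa using Nat.lt_of_succ_lt_succ hk)]

end Aux
section Core

variable {X Y : Type} [DecidableEq X] [DecidableEq Y]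

/-- The key semantic invariant on a (flattened) clause set `C` and domain `D`:
every assignment to `X` in the domain extends to a satisfying assignment of `C|_D`
which is unique on the existential variables of `D`. -/
def Pinv (C : Set (Clause X Y)) (D : Set (X ⊕ Y)) (χ : (X → Bool) → Prop) : Prop :=
  ∀ xa : X → Bool, χ xa →
    ∃ ya : Y → Bool, satCnf (combine xa ya) (restrictC C D) ∧
      ∀ ya' : Y → Bool, satCnf (combine xa ya') (restrictC C D) →
        ∀ y : Y, Sum.inr y ∈ D → ya' y = ya y

lemma restrictC_mono {C : Set (Clause X Y)} {D D' : Set (X ⊕ Y)} (h : D ⊆ D') :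
    restrictC C D ⊆ restrictC C D' :=
  fun _ hc => ⟨hc.1, fun l hl => h (hc.2 l hl)⟩

lemma Pinv_congr {C C' : Set (Clause X Y)} {D : Set (X ⊕ Y)} {χ : (X → Bool) → Prop}
    (h : restrictC C' D = restrictC C D) (hp : Pinv C D χ) : Pinv C' D χ := by
  intro xa hx
  obtain ⟨ya, h1, h2⟩ := hp xa hx
  exact ⟨ya, by rw [h]; exact h1, fun ya' hs => h2 ya' (by rw [← h]; exact hs)⟩

lemma restrictC_insert_of_not {L : Clause X Y} {C : Set (Clause X Y)} {D : Set (X ⊕ Y)}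
    (h : ∃ l ∈ L, l.1 ∉ D) : restrictC (insert L C) D = restrictC C D := by
  ext c
  constructor
  · rintro ⟨hc, hall⟩
    rcases Set.mem_insert_iff.1 hc with rfl | hc
    · obtain ⟨l, hl, hnl⟩ := h
      exact absurd (hall l hl) hnl
    · exact ⟨hc, hall⟩
  · rintro ⟨hc, hall⟩
    exact ⟨Set.mem_insert_of_mem _ hc, hall⟩

lemma restrictC_union_of_not {δ C : Set (Clause X Y)} {D : Set (X ⊕ Y)}
    (h : ∀ c ∈ δ, ∃ l ∈ c, l.1 ∉ D) : restrictC (C ∪ δ) D = restrictC C D := by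
  ext c
  constructor
  · rintro ⟨hc, hall⟩
    rcases hc with hc | hc
    · exact ⟨hc, hall⟩
    · obtain ⟨l, hl, hnl⟩ := h c hc
      exact absurd (hall l hl) hnl
  · rintro ⟨hc, hall⟩
    exact ⟨Or.inl hc, hall⟩

/-- The crucial preservation lemma for `Propagate`. -/
lemma propagate_P {C : Set (Clause X Y)} {D : Set (X ⊕ Y)} {χ : (X → Bool) → Prop} {v : Y}
    (hv : Sum.inr v ∉ D)
    (hdet : deterministic v C χ D) (hunc : unconflicted v C χ D)
    (hP : Pinv C D χ) : Pinv C (insert (Sum.inr v) D) χ := by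
  intro xa hχ
  obtain ⟨ya, hsat, huni⟩ := hP xa hχ
  have hrx : restrX (combine xa ya) = xa := rfl
  have hor := hdet (combine xa ya) hsat (by rw [hrx]; exact hχ)
  have hnand := hunc (combine xa ya) hsat (by rw [hrx]; exact hχ)
  have key : ∀ b : Bool, Ant C v D b (combine xa ya) → ¬ Ant C v D (!b) (combine xa ya) →
      ∃ ya' : Y → Bool, satCnf (combine xa ya') (restrictC C (insert (Sum.inr v) D)) ∧
        ∀ ya'' : Y → Bool, satCnf (combine xa ya'') (restrictC C (insert (Sum.inr v) D)) →
          ∀ y : Y, Sum.inr y ∈ insert (Sum.inr v) D → ya'' y = ya' y := by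
    intro b hb hnb
    set ya' := Function.update ya v b with hya'
    have hag : ∀ w : X ⊕ Y, w ≠ Sum.inr v → combine xa ya' w = combine xa ya w := by
      intro w hw
      cases w with
      | inl x => rfl
      | inr y =>
        have hy : y ≠ v := fun h => hw (by rw [h])
        show ya' y = ya y
        rw [hya', Function.update_of_ne hy]
    have hva : combine xa ya' (Sum.inr v) = b := by
      show ya' v = b
      rw [hya', Function.update_self]
    refine ⟨ya', ?_, ?_⟩
    · -- satisfaction of C|_{D ∪ {v}}
      rintro c ⟨hcC, hcD⟩
      by_cases hall : ∀ l ∈ c, l.1 ∈ D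
      · obtain ⟨l, hl, hsl⟩ := hsat c ⟨hcC, hall⟩
        refine ⟨l, hl, ?_⟩
        unfold satLit at *
        rw [hag l.1 (fun h => hv (h ▸ hall l hl))]
        exact hsl
      · by_contra hns
        have hfals' : ∀ l ∈ c, ¬ satLit (combine xa ya') l := by
          intro l hl hsl; exact hns ⟨l, hl, hsl⟩
        push_neg at hall
        obtain ⟨l0, hl0, hl0D⟩ := hall
        have hl0v : l0.1 = Sum.inr v := by
          rcases Set.mem_insert_iff.1 (hcD l0 hl0) with h | h
          · exact h
          · exact absurd h hl0D
        have hl0b : l0.2 = !b := by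
          rcases Bool.eq_or_eq_not l0.2 b with h | h
          · exfalso
            apply hfals' l0 hl0
            show combine xa ya' l0.1 = l0.2
            rw [hl0v, hva, h]
          · exact h
        have hl0eq : l0 = (Sum.inr v, !b) := Prod.ext hl0v hl0b
        apply hnb
        refine ⟨c, ⟨hcC, ⟨⟨!b, hl0eq ▸ hl0⟩, ?_⟩⟩, hl0eq ▸ hl0, ?_⟩
        · intro l hl hlv
          rcases Set.mem_insert_iff.1 (hcD l hl) with h | h
          · exact absurd h hlv
          · exact h
        · intro l hl hlv hsl
          apply hfals' l hl
          unfold satLit at *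
          rw [hag l.1 hlv]
          exact hsl
    · -- uniqueness on D ∪ {v}
      intro ya'' hsat'' y hy
      have hsub : restrictC C D ⊆ restrictC C (insert (Sum.inr v) D) :=
        restrictC_mono (Set.subset_insert _ _)
      have hagr : ∀ y' : Y, Sum.inr y' ∈ D → ya'' y' = ya y' :=
        huni ya'' (fun c hc => hsat'' c (hsub hc))
      have hagw : ∀ w : X ⊕ Y, w ∈ D → combine xa ya'' w = combine xa ya w := by
        intro w hw
        cases w with
        | inl x => rfl
        | inr y' => exact hagr y' hw
      rcases Set.mem_insert_iff.1 hy with h | h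
      · -- y = v
        have hyv : y = v := Sum.inr.inj h
        rw [hyv]
        obtain ⟨c, ⟨hcC, ⟨_, hother⟩⟩, hlit, hfals⟩ := hb
        have hcD' : c ∈ restrictC C (insert (Sum.inr v) D) := by
          refine ⟨hcC, fun l hl => ?_⟩
          by_cases hlv : l.1 = Sum.inr v
          · rw [hlv]; exact Set.mem_insert _ _
          · exact Set.mem_insert_of_mem _ (hother l hl hlv)
        obtain ⟨l, hl, hsl⟩ := hsat'' c hcD'
        by_cases hlv : l.1 = Sum.inr v
        · rcases Bool.eq_or_eq_not l.2 b with hlb | hlb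
          · have : combine xa ya'' l.1 = l.2 := hsl
            rw [hlv, hlb] at this
            show ya'' v = ya' v
            rw [hya', Function.update_self]
            exact this
          · exfalso
            apply hnb
            have hleq : l = (Sum.inr v, !b) := Prod.ext hlv hlb
            exact ⟨c, ⟨hcC, ⟨⟨b, hlit⟩, hother⟩⟩, hleq ▸ hl, hfals⟩
        · exfalso
          apply hfals l hl hlv
          unfold satLit at *
          rw [← hagw l.1 (hother l hl hlv)]
          exact hsl
      · -- y ∈ D
        have hyv : y ≠ v := fun hh => hv (hh ▸ h)
        rw [hya', Function.update_of_ne hyv]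
        exact hagr y h
  rcases hor with hb | hb
  · exact key true hb (fun hc => hnand ⟨hb, by simpa using hc⟩)
  · exact key false hb (fun hc => hnand ⟨by simpa using hc, hb⟩)

end Core
section InvSec

variable {X Y : Type} [DecidableEq X] [DecidableEq Y]

/-- The stack-level invariant. -/
def IDInv (C : List (Set (Clause X Y))) (D : List (Set (X ⊕ Y)))
    (χ α : (X → Bool) → Prop) : Prop :=
  1 ≤ C.length ∧ C.length = D.length ∧
    ∀ k : ℕ, 0 < k → k ≤ C.length →
      Pinv (stackUnion (C.take k)) (stackUnion (D.take k)) (fun xa => χ xa ∧ α xa)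

lemma inv_init (φ : Set (Clause X Y))
    (hφY : ∀ c ∈ φ, ∃ l ∈ c, ∃ y : Y, l.1 = Sum.inr y) :
    IDInv [φ] [Set.range Sum.inl] (fun _ => True) (fun _ => True) := by
  refine ⟨le_refl 1, rfl, ?_⟩
  intro k hk hk1
  have hk : k = 1 := le_antisymm hk1 hk
  subst hk
  have e1 : stackUnion (List.take 1 [φ]) = φ := by
    rw [show List.take 1 [φ] = [φ] from rfl, stackUnion_cons, stackUnion_nil]
    simp
  have e2 : stackUnion (List.take 1 [Set.range (Sum.inl : X → X ⊕ Y)])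
      = Set.range Sum.inl := by
    rw [show List.take 1 [Set.range (Sum.inl : X → X ⊕ Y)]
        = [Set.range Sum.inl] from rfl, stackUnion_cons, stackUnion_nil]
    simp
  rw [e1, e2]
  intro xa _
  refine ⟨fun _ => true, ?_, ?_⟩
  · rintro c ⟨hc, hall⟩
    obtain ⟨l, hl, y, hly⟩ := hφY c hc
    have := hall l hl
    rw [hly] at this
    obtain ⟨x, hx⟩ := this
    exact absurd hx Sum.inl_ne_inr
  · intro ya' _ y hy
    obtain ⟨x, hx⟩ := hy
    exact absurd hx Sum.inl_ne_inr

lemma inv_step {s s' : IDState X Y} (hstep : Step s s')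
    (hinv : IDInv s.C s.D s.chi s.alpha) : IDInv s'.C s'.D s'.chi s'.alpha := by
  obtain ⟨hlen1, hlenCD, hP⟩ := hinv
  cases hstep with
  | propagate C D χ α v hv hdet hunc =>
    simp only at *
    have hD0 : D ≠ [] := by
      intro h
      have : D.length = 0 := by rw [h]; rfl
      omega
    refine ⟨hlen1, by rw [hlenCD, addLast_length _ _ hD0], ?_⟩
    intro k hk hk1
    rcases lt_or_eq_of_le hk1 with hlt | heq
    · rw [addLast_take _ _ _ (by omega)]
      exact hP k hk hk1
    · subst heq
      rw [List.take_length, hlenCD, ← addLast_length D (Sum.inr v) hD0,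
        List.take_length, stackUnion_addLast]
      have := hP C.length hk (le_refl _)
      rw [List.take_length, hlenCD, List.take_length] at this
      exact propagate_P hv hdet hunc this
  | decide C D χ α v δ hv hδfin hδ =>
    simp only at *
    have l1 : (C ++ [δ]).length = C.length + 1 := by simp
    refine ⟨by omega, by simp [hlenCD], ?_⟩
    intro k hk hk1
    rcases lt_or_eq_of_le hk1 with hlt | heq
    · have hkC : k ≤ C.length := by rw [l1] at hlt; omega
      have hkD : k ≤ D.length := by omega
      rw [List.take_append_of_le_length hkC, List.take_append_of_le_length hkD]
      exact hP k hk hkC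
    · subst heq
      rw [List.take_length]
      have hlD : (C ++ [δ]).length = (D ++ [(∅ : Set (X ⊕ Y))]).length := by
        simp [hlenCD]
      rw [hlD, List.take_length, stackUnion_append, stackUnion_append,
        stackUnion_cons, stackUnion_nil, stackUnion_cons, stackUnion_nil]
      have hbase := hP C.length hlen1 (le_refl _)
      rw [List.take_length, hlenCD, List.take_length] at hbase
      refine Pinv_congr ?_ (by simpa using hbase)
      have : stackUnion D ∪ (∅ ∪ ∅) = stackUnion D := by simp
      rw [this]
      apply restrictC_union_of_not
      intro c hc
      have hc' : c ∈ δ := by simpa using hc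
      obtain ⟨⟨b, hb⟩, _⟩ := hδ c hc'
      exact ⟨(Sum.inr v, b), hb, hv⟩
  | sat C D χ hD => exact ⟨hlen1, hlenCD, hP⟩
  | conflict C D χ α v σ hv hsat hχ hα ht hf => exact ⟨hlen1, hlenCD, hP⟩
  | analyze C D χ α L σ c l hc hl hlc => exact ⟨hlen1, hlenCD, hP⟩
  | unsat C D χ α L σ hvars hfals => exact ⟨hlen1, hlenCD, hP⟩
  | learn C D χ α L σ h =>
    simp only at *
    obtain ⟨c0, rest, rfl⟩ : ∃ c0 rest, C = c0 :: rest := by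
      cases C with
      | nil => simp at hlen1
      | cons a t => exact ⟨a, t, rfl⟩
    refine ⟨by simpa [addFirst] using hlen1, by simpa [addFirst] using hlenCD, ?_⟩
    intro k hk hk1
    have hk1' : k ≤ (c0 :: rest).length := by simpa [addFirst] using hk1
    obtain ⟨k, rfl⟩ : ∃ k', k = k' + 1 := ⟨k - 1, by omega⟩
    have htake : stackUnion ((addFirst (c0 :: rest) L).take (k + 1)) =
        insert L (stackUnion ((c0 :: rest).take (k + 1))) := by
      show stackUnion ((insert L c0 :: rest).take (k + 1)) = _
      rw [List.take_succ_cons, List.take_succ_cons, stackUnion_cons, stackUnion_cons,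
        Set.insert_union]
    rw [htake]
    refine Pinv_congr ?_ (hP (k + 1) hk hk1')
    apply restrictC_insert_of_not
    obtain ⟨l, hl, hnl⟩ := h
    exact ⟨l, hl, fun hmem => hnl (stackUnion_take_subset D (k + 1) hmem)⟩
  | backtrack S C D χ α k h0 hk =>
    simp only at *
    refine ⟨by rw [List.length_take]; omega, ?_, ?_⟩
    · rw [List.length_take, List.length_take]; omega
    · intro j hj hj1
      rw [List.length_take] at hj1
      have hjk : j ≤ k := le_trans hj1 (min_le_left _ _)
      have hjC : j ≤ C.length := le_trans hj1 (min_le_right _ _)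
      rw [List.take_take, List.take_take, min_eq_left hjk]
      exact hP j hj hjC

end InvSec

/-- In every reachable state, every existential variable in (the union of) D has a unique
Skolem function for domain χ∧α in the clause set C restricted to D. -/
theorem stmt_8 {X Y : Type} [Fintype X] [Fintype Y] [DecidableEq X] [DecidableEq Y]
    (φ : Set (Clause X Y)) (hφfin : φ.Finite)
    (hφY : ∀ c ∈ φ, ∃ l ∈ c, ∃ y : Y, l.1 = Sum.inr y) :
    ∀ s : IDState X Y, Reachable φ s →
      ∀ y : Y, Sum.inr y ∈ stackUnion s.D →
        uniqueSkolem (restrictC (stackUnion s.C) (stackUnion s.D))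
          (fun xa => s.chi xa ∧ s.alpha xa) y := by
  have hreach : ∀ s : IDState X Y, Reachable φ s → IDInv s.C s.D s.chi s.alpha := by
    intro s h
    induction h with
    | refl => exact inv_init φ hφY
    | tail _ hstep ih => exact inv_step hstep ih
  intro s hs y hy
  obtain ⟨hlen1, hlenCD, hP⟩ := hreach s hs
  have hfull := hP s.C.length hlen1 (le_refl _)
  rw [List.take_length, hlenCD, List.take_length] at hfull
  intro xa hxa
  obtain ⟨ya, hsat, huni⟩ := hfull xa hxa
  refine ⟨ya y, ⟨ya, rfl, hsat⟩, ?_⟩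
  rintro b ⟨ya', hb, hs'⟩
  rw [← hb]
  exact huni ya' hs' y hy
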